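/- Let U=(A,F) be a binary information system, z a problem over U of dimension n, and Γ₁ a decision tree over z that solves z relative to U using both attributes from F(z) and proper hypotheses over z. Then there exists a decision tree Γ₂ over z that solves z relative to U, uses only proper hypotheses over z, and has depth at most 2^{h(Γ₁)} − 1, where h(Γ₁) is the depth of Γ₁. -/
import Mathlib


/-- Decision trees over a problem `z = (f₀, …, f_{n-1})` of dimension `n`:
a node is a terminal node labeled with an answer tuple, an attribute query
(with two children, for the answers `fᵢ(x) = false` and `fᵢ(x) = true`), or a
hypothesis query `{f₀(x) = δ₀, …, f_{n-1}(x) = δ_{n-1}}` (with a child for the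
confirming answer and one child for each possible counterexample `fᵢ(x) = ¬δᵢ`). -/
inductive DT (n : ℕ) : Type where
  | leaf (ans : Fin n → Bool)
  | attr (i : Fin n) (c : Bool → DT n)
  | hyp (δ : Fin n → Bool) (conf : DT n) (ctr : Fin n → DT n)

namespace DT

/-- Depth of a decision tree: maximum number of queries on a complete path. -/
def depth {n : ℕ} : DT n → ℕ
  | leaf _ => 0
  | attr _ c => 1 + max (depth (c false)) (depth (c true))
  | hyp _ conf ctr => 1 + max (depth conf) (Finset.univ.sup fun i => depth (ctr i))

/-- The tree solves the problem `z` for the element `a`: along every complete path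
compatible with `a` (attribute queries are answered truthfully; a true hypothesis
is confirmed, and a false hypothesis may be answered by any valid counterexample),
the terminal label equals `z(a)`. -/
def Solves {A : Type} {n : ℕ} (z : Fin n → A → Bool) (a : A) : DT n → Prop
  | leaf ans => ∀ i, ans i = z i a
  | attr i c => Solves z a (c (z i a))
  | hyp δ conf ctr =>
      ((∀ i, z i a = δ i) → Solves z a conf) ∧
      (∀ i, z i a ≠ δ i → Solves z a (ctr i))

/-- The tree uses no attribute queries (only hypotheses). -/
def NoAttr {n : ℕ} : DT n → Prop
  | leaf _ => True
  | attr _ _ => False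
  | hyp _ conf ctr => NoAttr conf ∧ ∀ i, NoAttr (ctr i)

/-- All hypotheses used in the tree are proper for `U`, i.e. the corresponding
equation system `{f₀(x) = δ₀, …}` is consistent on `A`. -/
def ProperHyps {A : Type} {n : ℕ} (z : Fin n → A → Bool) : DT n → Prop
  | leaf _ => True
  | attr _ c => ∀ b, ProperHyps z (c b)
  | hyp δ conf ctr =>
      (∃ a : A, ∀ i, z i a = δ i) ∧ ProperHyps z conf ∧ ∀ i, ProperHyps z (ctr i)

end DT

namespace DT

open Classical in
/-- Replace each leaf `ans` of `T` by a hypothesis query on `ans` (if proper),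
with `T₁` attached at every counterexample branch. -/
noncomputable def graft {A : Type} {n : ℕ} (z : Fin n → A → Bool) (T₁ : DT n) : DT n → DT n
  | leaf ans =>
      if ∃ a : A, ∀ j, z j a = ans j then hyp ans (leaf ans) (fun _ => T₁) else T₁
  | attr i c => attr i (fun b => graft z T₁ (c b))
  | hyp δ conf ctr => hyp δ (graft z T₁ conf) (fun i => graft z T₁ (ctr i))

lemma solves_graft_of_solves {A : Type} {n : ℕ} {z : Fin n → A → Bool} {T₁ : DT n}
    {a : A} : ∀ {T : DT n}, Solves z a T → Solves z a (graft z T₁ T)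
  | leaf ans, h => by
      rw [graft, if_pos ⟨a, fun j => (h j).symm⟩]
      exact ⟨fun _ => h, fun j hj => absurd (h j).symm hj⟩
  | attr i c, h => solves_graft_of_solves (T := c (z i a)) h
  | hyp δ conf ctr, h =>
      ⟨fun hc => solves_graft_of_solves (h.1 hc),
       fun j hj => solves_graft_of_solves (h.2 j hj)⟩

lemma solves_graft_of_solves₁ {A : Type} {n : ℕ} {z : Fin n → A → Bool} {T₁ : DT n}
    {a : A} (h₁ : Solves z a T₁) : ∀ (T : DT n), Solves z a (graft z T₁ T)
  | leaf ans => by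
      rw [graft]
      split
      · exact ⟨fun h j => (h j).symm, fun _ _ => h₁⟩
      · exact h₁
  | attr i c => solves_graft_of_solves₁ h₁ (c (z i a))
  | hyp δ conf ctr =>
      ⟨fun _ => solves_graft_of_solves₁ h₁ conf,
       fun j _ => solves_graft_of_solves₁ h₁ (ctr j)⟩

lemma noattr_graft {A : Type} {n : ℕ} {z : Fin n → A → Bool} {T₁ : DT n}
    (h₁ : NoAttr T₁) : ∀ {T : DT n}, NoAttr T → NoAttr (graft z T₁ T)
  | leaf ans, _ => by
      rw [graft]; split
      · exact ⟨trivial, fun _ => h₁⟩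
      · exact h₁
  | hyp δ conf ctr, h =>
      ⟨noattr_graft h₁ h.1, fun j => noattr_graft h₁ (h.2 j)⟩

lemma proper_graft {A : Type} {n : ℕ} {z : Fin n → A → Bool} {T₁ : DT n}
    (h₁ : ProperHyps z T₁) : ∀ {T : DT n}, ProperHyps z T → ProperHyps z (graft z T₁ T)
  | leaf ans, _ => by
      rw [graft]; split
      · next hx => exact ⟨hx, trivial, fun _ => h₁⟩
      · exact h₁
  | attr i c, h => fun b => proper_graft h₁ (h b)
  | hyp δ conf ctr, h =>
      ⟨h.1, proper_graft h₁ h.2.1, fun j => proper_graft h₁ (h.2.2 j)⟩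

lemma depth_graft {A : Type} {n : ℕ} {z : Fin n → A → Bool} {T₁ : DT n} :
    ∀ (T : DT n), depth (graft z T₁ T) ≤ depth T + 1 + depth T₁
  | leaf ans => by
      rw [graft]; split <;> simp [depth] <;> omega
  | attr i c => by
      have hf := depth_graft (z := z) (T₁ := T₁) (c false)
      have ht := depth_graft (z := z) (T₁ := T₁) (c true)
      simp only [graft, depth]
      omega
  | hyp δ conf ctr => by
      have hc := depth_graft (z := z) (T₁ := T₁) conf
      have hs : (Finset.univ.sup fun i => depth (graft z T₁ (ctr i))) ≤
          (Finset.univ.sup fun i => depth (ctr i)) + 1 + depth T₁ :=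
        Finset.sup_le fun i _ => le_trans (depth_graft (ctr i))
          (by have hle : depth (ctr i) ≤ Finset.univ.sup fun i => depth (ctr i) :=
                Finset.le_sup (f := fun i => depth (ctr i)) (Finset.mem_univ i)
              omega)
      simp only [graft, depth]
      omega

lemma main {A : Type} {n : ℕ} (z : Fin n → A → Bool) :
    ∀ (Γ : DT n) (P : A → Prop), (∀ a, P a → Solves z a Γ) → ProperHyps z Γ →
    ∃ Γ' : DT n, (∀ a, P a → Solves z a Γ') ∧ NoAttr Γ' ∧ ProperHyps z Γ' ∧
      Γ'.depth ≤ 2 ^ Γ.depth - 1 := by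
  intro Γ
  induction Γ with
  | leaf ans =>
      intro P hs _
      exact ⟨leaf ans, hs, trivial, trivial, by simp [depth]⟩
  | attr i c ih =>
      intro P hs hp
      obtain ⟨T₀, hs₀, hna₀, hp₀, hd₀⟩ := ih false (fun a => P a ∧ z i a = false)
        (fun a ⟨pa, ha⟩ => by have := hs a pa; rwa [Solves, ha] at this) (hp false)
      obtain ⟨T₁, hs₁, hna₁, hp₁, hd₁⟩ := ih true (fun a => P a ∧ z i a = true)
        (fun a ⟨pa, ha⟩ => by have := hs a pa; rwa [Solves, ha] at this) (hp true)
      refine ⟨graft z T₁ T₀, ?_, noattr_graft hna₁ hna₀, proper_graft hp₁ hp₀, ?_⟩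
      · intro a pa
        cases hzi : z i a with
        | false => exact solves_graft_of_solves (hs₀ a ⟨pa, hzi⟩)
        | true => exact solves_graft_of_solves₁ (hs₁ a ⟨pa, hzi⟩) T₀
      · have hg := depth_graft (z := z) (T₁ := T₁) T₀
        have h0 : (1:ℕ) ≤ 2 ^ depth (c false) := Nat.one_le_two_pow
        have h1 : (1:ℕ) ≤ 2 ^ depth (c true) := Nat.one_le_two_pow
        have hm0 : 2 ^ depth (c false) ≤ 2 ^ max (depth (c false)) (depth (c true)) :=
          Nat.pow_le_pow_right (by norm_num) (le_max_left _ _)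
        have hm1 : 2 ^ depth (c true) ≤ 2 ^ max (depth (c false)) (depth (c true)) :=
          Nat.pow_le_pow_right (by norm_num) (le_max_right _ _)
        have he : 2 ^ depth (attr i c) = 2 * 2 ^ max (depth (c false)) (depth (c true)) := by
          rw [depth, pow_add, pow_one]
        omega
  | hyp δ conf ctr ihc ihk =>
      intro P hs hp
      obtain ⟨Tc, hsc, hnac, hpc, hdc⟩ := ihc (fun a => P a ∧ ∀ j, z j a = δ j)
        (fun a ⟨pa, ha⟩ => (hs a pa).1 ha) hp.2.1
      choose Tk hsk hnak hpk hdk using fun i => ihk i (fun a => P a ∧ z i a ≠ δ i)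
        (fun a ⟨pa, ha⟩ => (hs a pa).2 i ha) (hp.2.2 i)
      refine ⟨hyp δ Tc Tk, fun a pa => ⟨fun h => hsc a ⟨pa, h⟩, fun j hj => hsk j a ⟨pa, hj⟩⟩,
        ⟨hnac, hnak⟩, ⟨hp.1, hpc, hpk⟩, ?_⟩
      simp only [depth]
      set m := max (depth conf) (Finset.univ.sup fun i => depth (ctr i)) with hm
      have h1 : (1:ℕ) ≤ 2 ^ m := Nat.one_le_two_pow
      have hdc' : depth Tc ≤ 2 ^ m - 1 :=
        le_trans hdc (Nat.sub_le_sub_right (Nat.pow_le_pow_right (by norm_num) (le_max_left _ _)) 1)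
      have hdk' : (Finset.univ.sup fun i => depth (Tk i)) ≤ 2 ^ m - 1 :=
        Finset.sup_le fun i _ => le_trans (hdk i) (Nat.sub_le_sub_right
          (Nat.pow_le_pow_right (by norm_num)
            (le_trans (Finset.le_sup (f := fun i => depth (ctr i)) (Finset.mem_univ i))
              (le_max_right _ _))) 1)
      have he : (2:ℕ) ^ (1 + m) = 2 * 2 ^ m := by rw [pow_add, pow_one]
      have hmax : max (depth Tc) (Finset.univ.sup fun i => depth (Tk i)) ≤ 2 ^ m - 1 :=
        max_le hdc' hdk'
      omega

end DT


/-- from a tree using attributes and proper hypotheses one obtains a tree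
using only proper hypotheses of depth at most `2^{h(Γ₁)} - 1`. -/
theorem stmt1 {A : Type} (F : Set (A → Bool)) {n : ℕ} (z : Fin n → A → Bool)
    (hz : ∀ i, z i ∈ F) (Γ₁ : DT n) (hsolve : ∀ a : A, DT.Solves z a Γ₁)
    (hproper : DT.ProperHyps z Γ₁) :
    ∃ Γ₂ : DT n, (∀ a : A, DT.Solves z a Γ₂) ∧ DT.NoAttr Γ₂ ∧ DT.ProperHyps z Γ₂ ∧
      Γ₂.depth ≤ 2 ^ Γ₁.depth - 1 := by
  obtain ⟨Γ₂, h1, h2, h3, h4⟩ := DT.main z Γ₁ (fun _ => True) (fun a _ => hsolve a) hproper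
  exact ⟨Γ₂, fun a => h1 a trivial, h2, h3, h4⟩
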